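/- Define the sequence f_l(z) ∈ ℤ[z,z⁻¹] by f₁ = 0, f₂ = 1/z, and f_l = f_{l−2} − z·f_{l−1} for l ≥ 3. Then for every l ≥ 2, f_l is nonzero; moreover for l ≥ 3 odd all coefficients of f_l are nonpositive (and f_l ≠ 0), and for l ≥ 2 even all coefficients of f_l are nonnegative (and f_l ≠ 0). -/

import Mathlib

lemma T_one_mul_apply (g : AddMonoidAlgebra ℤ ℤ) (m : ℤ) :
    (g * AddMonoidAlgebra.single (1 : ℤ) (1 : ℤ)).coeff m = g.coeff (m - 1) := by
  rw [AddMonoidAlgebra.coeff_mul_single_apply, mul_one, sub_eq_add_neg]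

open LaurentPolynomial in
/-- The Laurent polynomial sequence `f₁ = 0`, `f₂ = 1/z`, `f_l = f_{l-2} - z·f_{l-1}`:
for every `l ≥ 2`, `f_l ≠ 0`; for odd `l ≥ 3` all coefficients of `f_l` are
nonpositive, and for even `l ≥ 2` all coefficients are nonnegative. -/
theorem laurent_recursion_sign_pattern (f : ℕ → LaurentPolynomial ℤ)
    (hf1 : f 1 = 0)
    (hf2 : f 2 = LaurentPolynomial.T (-1))
    (hrec : ∀ l : ℕ, 3 ≤ l → f l = f (l - 2) - LaurentPolynomial.T 1 * f (l - 1)) :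
    (∀ l : ℕ, 2 ≤ l → f l ≠ 0) ∧
    (∀ l : ℕ, 3 ≤ l → Odd l → (∀ m : ℤ, (f l).coeff m ≤ 0) ∧ f l ≠ 0) ∧
    (∀ l : ℕ, 2 ≤ l → Even l → (∀ m : ℤ, 0 ≤ (f l).coeff m) ∧ f l ≠ 0) := by
  have key : ∀ l : ℕ, 2 ≤ l →
      ((Even l → (∀ m : ℤ, 0 ≤ (f l).coeff m) ∧ f l ≠ 0) ∧
       (Odd l → (∀ m : ℤ, (f l).coeff m ≤ 0) ∧ f l ≠ 0)) := by
    intro l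
    induction l using Nat.strong_induction_on with
    | _ l ih =>
      intro hl
      rcases eq_or_lt_of_le hl with h2 | h2
      · -- l = 2
        subst h2
        constructor
        · intro _
          refine ⟨?_, ?_⟩
          · intro m; rw [hf2]; simp only [LaurentPolynomial.T_apply]
            split <;> norm_num
          · rw [hf2]
            show (AddMonoidAlgebra.single (-1 : ℤ) (1 : ℤ)) ≠ 0
            exact fun h => one_ne_zero (AddMonoidAlgebra.single_eq_zero.mp h)
        · intro h; exact absurd h (by decide)
      rcases eq_or_lt_of_le (Nat.succ_le_of_lt h2) with h3 | h3
      · -- l = 3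
        have hl3 : l = 3 := by omega
        subst hl3
        have h3 : f 3 = -(LaurentPolynomial.T 0) := by
          rw [hrec 3 le_rfl]
          rw [hf1, hf2, zero_sub, ← LaurentPolynomial.T_add]
          norm_num
        constructor
        · intro h; exact absurd h (by decide)
        · intro _
          refine ⟨?_, ?_⟩
          · intro m; rw [h3]
            have : (-(LaurentPolynomial.T 0 : LaurentPolynomial ℤ)).coeff m
                = -((LaurentPolynomial.T 0 : LaurentPolynomial ℤ).coeff m) := by
              rw [AddMonoidAlgebra.coeff_neg, Finsupp.neg_apply]
            rw [this, LaurentPolynomial.T_apply]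
            split <;> omega
          · rw [h3, neg_ne_zero]
            show (AddMonoidAlgebra.single (0 : ℤ) (1 : ℤ)) ≠ 0
            exact fun h => one_ne_zero (AddMonoidAlgebra.single_eq_zero.mp h)
      · -- l ≥ 4
        have hl3 : 3 ≤ l := by omega
        have hrecl := hrec l hl3
        have h1 : 2 ≤ l - 2 := by omega
        have h2' : 2 ≤ l - 1 := by omega
        have ih2 := ih (l - 2) (by omega) h1
        have ih1 := ih (l - 1) (by omega) h2'
        have coeff : ∀ m : ℤ, (f l).coeff m = (f (l-2)).coeff m - (f (l-1)).coeff (m - 1) := by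
          intro m
          rw [hrecl]
          have hT : (LaurentPolynomial.T 1 : LaurentPolynomial ℤ) * f (l-1)
              = f (l-1) * AddMonoidAlgebra.single (1 : ℤ) (1 : ℤ) := by
            rw [LaurentPolynomial.T_mul]; rfl
          rw [AddMonoidAlgebra.coeff_sub, Finsupp.sub_apply, hT, T_one_mul_apply]
        constructor
        · intro hev
          have hev2 : Even (l - 2) := by
            rcases hev with ⟨k, hk⟩; exact ⟨k - 1, by omega⟩
          have hodd1 : Odd (l - 1) := by
            rcases hev with ⟨k, hk⟩; exact ⟨k - 1, by omega⟩
          obtain ⟨hpos2, hne2⟩ := ih2.1 hev2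
          obtain ⟨hneg1, _⟩ := ih1.2 hodd1
          have hsign : ∀ m : ℤ, 0 ≤ (f l).coeff m := by
            intro m; rw [coeff m]
            have := hpos2 m; have := hneg1 (m - 1); omega
          refine ⟨hsign, ?_⟩
          obtain ⟨m, hm⟩ := Finsupp.ne_iff.mp (mt AddMonoidAlgebra.coeff_eq_zero.mp hne2)
          simp only [Finsupp.coe_zero, Pi.zero_apply] at hm
          intro h0
          apply hm
          have : (f l).coeff m = 0 := by rw [h0]; simp
          rw [coeff m] at this
          have := hneg1 (m - 1); have := hpos2 m; omega
        · intro hodd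
          have hodd2 : Odd (l - 2) := by
            rcases hodd with ⟨k, hk⟩; exact ⟨k - 1, by omega⟩
          have hev1 : Even (l - 1) := by
            rcases hodd with ⟨k, hk⟩; exact ⟨k, by omega⟩
          obtain ⟨hneg2, hne2⟩ := ih2.2 hodd2
          obtain ⟨hpos1, _⟩ := ih1.1 hev1
          have hsign : ∀ m : ℤ, (f l).coeff m ≤ 0 := by
            intro m; rw [coeff m]
            have := hneg2 m; have := hpos1 (m - 1); omega
          refine ⟨hsign, ?_⟩
          obtain ⟨m, hm⟩ := Finsupp.ne_iff.mp (mt AddMonoidAlgebra.coeff_eq_zero.mp hne2)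
          simp only [Finsupp.coe_zero, Pi.zero_apply] at hm
          intro h0
          apply hm
          have : (f l).coeff m = 0 := by rw [h0]; simp
          rw [coeff m] at this
          have := hpos1 (m - 1); have := hneg2 m; omega
  refine ⟨?_, ?_, ?_⟩
  · intro l hl
    rcases Nat.even_or_odd l with he | ho
    · exact ((key l hl).1 he).2
    · exact ((key l hl).2 ho).2
  · intro l hl ho; exact (key l (by omega)).2 ho
  · intro l hl he; exact (key l hl).1 he
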